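/- arXiv:2306.05838 — 2 statements merged into one kernel-verified Lean document; each statement's English description precedes it below -/
import Mathlib

section
/- (Lovász) Two graphs G and G' with at most n vertices are isomorphic if and only if hom(F,G) = hom(F,G') for all graphs F with at most n vertices. -/
open Function

noncomputable section LovaszAux

variable {V W W' : Type*}

/-- The quotient graph of `F` by a setoid `s`. -/
private def quotGraph (F : SimpleGraph V) (s : Setoid V) : SimpleGraph (Quotient s) where
  Adj a b := a ≠ b ∧ ∃ x y, Quotient.mk s x = a ∧ Quotient.mk s y = b ∧ F.Adj x y
  symm := ⟨by
    rintro a b ⟨hne, x, y, hx, hy, hxy⟩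
    exact ⟨hne.symm, y, x, hy, hx, hxy.symm⟩⟩
  loopless := ⟨by rintro a ⟨hne, -⟩; exact hne rfl⟩

/-- For an independent setoid, the quotient map is a graph homomorphism. -/
private def quotHom (F : SimpleGraph V) (s : Setoid V)
    (hs : ∀ x y, F.Adj x y → ¬ s x y) : F →g quotGraph F s where
  toFun := Quotient.mk s
  map_rel' := by
    intro x y h
    exact ⟨fun he => hs x y h (Quotient.exact he), x, y, rfl, rfl, h⟩

/-- Homomorphisms with kernel `s` correspond to injective homomorphisms from the quotient. -/
private def fiberEquiv (F : SimpleGraph V) (G : SimpleGraph W) (s : Setoid V)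
    (hs : ∀ x y, F.Adj x y → ¬ s x y) :
    {φ : F →g G // Setoid.ker ⇑φ = s} ≃
      {ψ : quotGraph F s →g G // Function.Injective ⇑ψ} where
  toFun := fun ⟨φ, hφ⟩ =>
    ⟨⟨Quotient.lift ⇑φ (fun x y h => by rw [← hφ] at h; exact h), by
        rintro a b ⟨-, x, y, rfl, rfl, hxy⟩
        exact φ.map_adj hxy⟩, by
      intro a b
      induction a using Quotient.ind
      induction b using Quotient.ind
      intro hab
      exact Quotient.sound (by rw [← hφ]; exact hab)⟩
  invFun := fun ⟨ψ, hψ⟩ =>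
    ⟨ψ.comp (quotHom F s hs), by
      refine Setoid.ext fun x y => ?_
      rw [Setoid.ker_def]
      constructor
      · intro h
        exact Quotient.exact (hψ h)
      · intro h
        exact congrArg ψ (Quotient.sound h)⟩
  left_inv := fun ⟨φ, hφ⟩ => Subtype.ext (DFunLike.ext _ _ fun x => rfl)
  right_inv := fun ⟨ψ, hψ⟩ => Subtype.ext (DFunLike.ext _ _ fun a => by
    induction a using Quotient.ind
    rfl)

private lemma finite_setoid [Finite V] : Finite (Setoid V) := by
  have : Function.Injective fun s : Setoid V => (⇑s : V → V → Prop) := by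
    intro s t h
    exact Setoid.ext fun a b => by rw [show ⇑s = ⇑t from h]
  exact Finite.of_injective _ this

private lemma nat_card_sigma {ι : Type*} [Fintype ι] (f : ι → Type*) [∀ i, Finite (f i)] :
    Nat.card (Σ i, f i) = ∑ i, Nat.card (f i) := by
  letI := fun i => Fintype.ofFinite (f i)
  simp [Nat.card_eq_fintype_card, Fintype.card_sigma]

/-- Precomposition with an isomorphism, on hom-sets. -/
private def homEquivOfIso {F₁ : SimpleGraph V} {F₂ : SimpleGraph W} (e : F₁ ≃g F₂)
    (G : SimpleGraph W') : (F₁ →g G) ≃ (F₂ →g G) where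
  toFun φ := φ.comp e.symm.toHom
  invFun φ := φ.comp e.toHom
  left_inv φ := DFunLike.ext _ _ fun x => by simp
  right_inv φ := DFunLike.ext _ _ fun x => by simp

/-- Postcomposition with an isomorphism, on hom-sets. -/
private def homEquivOfIsoRight {G₁ : SimpleGraph V} {G₂ : SimpleGraph W} (e : G₁ ≃g G₂)
    (F : SimpleGraph W') : (F →g G₁) ≃ (F →g G₂) where
  toFun φ := e.toHom.comp φ
  invFun φ := e.symm.toHom.comp φ
  left_inv φ := DFunLike.ext _ _ fun x => by simp
  right_inv φ := DFunLike.ext _ _ fun x => by simp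

private def isoComap (F : SimpleGraph V) (e : V ≃ W) : F ≃g F.comap ⇑e.symm :=
  ⟨e, by simp [SimpleGraph.comap]⟩

/-- Key lemma: equality of hom counts implies equality of injective hom counts,
by strong induction on the number of vertices. -/
private lemma injCount_eq (n : ℕ) {m m' : ℕ} (G : SimpleGraph (Fin m)) (G' : SimpleGraph (Fin m'))
    (hhom : ∀ k, k ≤ n → ∀ F : SimpleGraph (Fin k),
      Nat.card (F →g G) = Nat.card (F →g G')) :
    ∀ k, k ≤ n → ∀ (V : Type) (_ : Fintype V), Fintype.card V = k →
      ∀ F : SimpleGraph V,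
        Nat.card {φ : F →g G // Function.Injective ⇑φ}
          = Nat.card {φ : F →g G' // Function.Injective ⇑φ} := by
  intro k
  induction k using Nat.strong_induction_on with
  | _ k IH =>
    intro hk V instV hV F
    classical
    haveI : Finite (Setoid V) := finite_setoid
    letI : Fintype (Setoid V) := Fintype.ofFinite _
    -- hom counts agree for `F` itself, by transfer to `Fin k`
    have hFG : Nat.card (F →g G) = Nat.card (F →g G') := by
      have e : V ≃ Fin k := Fintype.equivFinOfCardEq hV
      have h1 := Nat.card_congr (homEquivOfIso (isoComap F e) G)
      have h2 := Nat.card_congr (homEquivOfIso (isoComap F e) G')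
      rw [h1, h2]
      exact hhom k hk _
    -- decompose hom counts according to the kernel
    have decomp : ∀ {m₀ : ℕ} (H : SimpleGraph (Fin m₀)),
        Nat.card (F →g H) = ∑ s : Setoid V, Nat.card {φ : F →g H // Setoid.ker ⇑φ = s} := by
      intro m₀ H
      rw [← Nat.card_congr (Equiv.sigmaFiberEquiv fun φ : F →g H => Setoid.ker ⇑φ)]
      exact nat_card_sigma _
    -- for setoids other than `⊥`, the fibers have equal cardinality
    have hfib : ∀ s : Setoid V, s ≠ ⊥ →
        Nat.card {φ : F →g G // Setoid.ker ⇑φ = s}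
          = Nat.card {φ : F →g G' // Setoid.ker ⇑φ = s} := by
      intro s hs
      by_cases hind : ∀ x y, F.Adj x y → ¬ s x y
      · rw [Nat.card_congr (fiberEquiv F G s hind), Nat.card_congr (fiberEquiv F G' s hind)]
        letI : Fintype (Quotient s) := Fintype.ofFinite _
        have hsurj : Function.Surjective (Quotient.mk s) := fun a => Quotient.exists_rep a
        have hninj : ¬ Function.Injective (Quotient.mk s) := by
          intro hinj
          apply hs
          have := (Setoid.injective_iff_ker_bot (Quotient.mk s)).mp hinj
          rwa [Setoid.ker_mk_eq] at this
        have hlt : Fintype.card (Quotient s) < Fintype.card V :=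
          Fintype.card_lt_of_surjective_not_injective _ hsurj hninj
        rw [hV] at hlt
        exact IH _ hlt (le_of_lt (lt_of_lt_of_le hlt hk)) (Quotient s) _ rfl (quotGraph F s)
      · push_neg at hind
        obtain ⟨x, y, hadj, hrel⟩ := hind
        have hempty : ∀ {m₀ : ℕ} (H : SimpleGraph (Fin m₀)),
            IsEmpty {φ : F →g H // Setoid.ker ⇑φ = s} := by
          intro m₀ H
          constructor
          rintro ⟨φ, hφ⟩
          have : φ x = φ y := by rw [← hφ] at hrel; exact hrel
          have hGadj := φ.map_adj hadj
          rw [this] at hGadj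
          exact H.loopless.irrefl _ hGadj
        rw [@Nat.card_of_isEmpty _ (hempty G), @Nat.card_of_isEmpty _ (hempty G')]
    -- the `⊥` fiber is the set of injective homs
    have hbot : ∀ {m₀ : ℕ} (H : SimpleGraph (Fin m₀)),
        Nat.card {φ : F →g H // Setoid.ker ⇑φ = ⊥}
          = Nat.card {φ : F →g H // Function.Injective ⇑φ} := by
      intro m₀ H
      exact Nat.card_congr (Equiv.subtypeEquivRight fun φ =>
        (Setoid.injective_iff_ker_bot ⇑φ).symm)
    have e1 : Nat.card (F →g G)
        = Nat.card {φ : F →g G // Setoid.ker ⇑φ = ⊥}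
          + ∑ s ∈ Finset.univ.erase ⊥, Nat.card {φ : F →g G // Setoid.ker ⇑φ = s} := by
      rw [decomp G, ← Finset.add_sum_erase Finset.univ _ (Finset.mem_univ ⊥)]
    have e2 : Nat.card (F →g G')
        = Nat.card {φ : F →g G' // Setoid.ker ⇑φ = ⊥}
          + ∑ s ∈ Finset.univ.erase ⊥, Nat.card {φ : F →g G' // Setoid.ker ⇑φ = s} := by
      rw [decomp G', ← Finset.add_sum_erase Finset.univ _ (Finset.mem_univ ⊥)]
    have e3 : (∑ s ∈ Finset.univ.erase ⊥, Nat.card {φ : F →g G // Setoid.ker ⇑φ = s})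
        = ∑ s ∈ Finset.univ.erase ⊥, Nat.card {φ : F →g G' // Setoid.ker ⇑φ = s} :=
      Finset.sum_congr rfl (fun s hsmem => hfib s (Finset.ne_of_mem_erase hsmem))
    have e4 := hbot G
    have e5 := hbot G'
    omega

end LovaszAux

/-- (Lovász) Two graphs with at most `n` vertices are isomorphic if and only if they
admit the same number of homomorphisms from every graph with at most `n` vertices. -/
theorem lovasz_hom_counts_characterise_iso (n m m' : ℕ) (hm : m ≤ n) (hm' : m' ≤ n)
    (G : SimpleGraph (Fin m)) (G' : SimpleGraph (Fin m')) :
    Nonempty (G ≃g G') ↔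
      ∀ (k : ℕ), k ≤ n → ∀ F : SimpleGraph (Fin k),
        Nat.card (F →g G) = Nat.card (F →g G') := by
  constructor
  · rintro ⟨e⟩ k hk F
    exact Nat.card_congr (homEquivOfIsoRight e F)
  · intro h
    -- injective homs in both directions
    have key := injCount_eq n G G' h
    have key' := injCount_eq n G' G (fun k hk F => (h k hk F).symm)
    have hpos : 0 < Nat.card {φ : G →g G // Function.Injective ⇑φ} := by
      refine Nat.card_pos_iff.mpr ⟨⟨⟨SimpleGraph.Hom.id, fun a b hab => hab⟩⟩, inferInstance⟩
    have hpos' : 0 < Nat.card {φ : G' →g G' // Function.Injective ⇑φ} := by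
      refine Nat.card_pos_iff.mpr ⟨⟨⟨SimpleGraph.Hom.id, fun a b hab => hab⟩⟩, inferInstance⟩
    rw [key m hm (Fin m) inferInstance (Fintype.card_fin m) G] at hpos
    rw [key' m' hm' (Fin m') inferInstance (Fintype.card_fin m') G'] at hpos'
    obtain ⟨⟨f, hf⟩⟩ := Nat.card_pos_iff.mp hpos |>.1
    obtain ⟨⟨g, hg⟩⟩ := Nat.card_pos_iff.mp hpos' |>.1
    -- m = m'
    have hmm : m = m' := by
      have h1 : m ≤ m' := by
        have := Fintype.card_le_of_injective ⇑f hf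
        simpa using this
      have h2 : m' ≤ m := by
        have := Fintype.card_le_of_injective ⇑g hg
        simpa using this
      omega
    subst hmm
    -- f is bijective
    have fbij : Function.Bijective ⇑f :=
      (Fintype.bijective_iff_injective_and_card ⇑f).mpr ⟨hf, rfl⟩
    -- edge counts are equal, so `mapEdgeSet f` is surjective
    have hecard : Nat.card G.edgeSet = Nat.card G'.edgeSet := by
      have h1 : Nat.card G.edgeSet ≤ Nat.card G'.edgeSet :=
        Nat.card_le_card_of_injective _ (SimpleGraph.Hom.mapEdgeSet.injective f hf)
      have h2 : Nat.card G'.edgeSet ≤ Nat.card G.edgeSet :=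
        Nat.card_le_card_of_injective _ (SimpleGraph.Hom.mapEdgeSet.injective g hg)
      omega
    have hesurj : Function.Surjective (SimpleGraph.Hom.mapEdgeSet f) := by
      letI : Fintype G.edgeSet := Fintype.ofFinite _
      letI : Fintype G'.edgeSet := Fintype.ofFinite _
      have hcards : Fintype.card G.edgeSet = Fintype.card G'.edgeSet := by
        rw [← Nat.card_eq_fintype_card, ← Nat.card_eq_fintype_card]
        exact hecard
      exact ((Fintype.bijective_iff_injective_and_card _).mpr
        ⟨SimpleGraph.Hom.mapEdgeSet.injective f hf, hcards⟩).2
    -- build the isomorphism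
    refine ⟨⟨Equiv.ofBijective ⇑f fbij, ?_⟩⟩
    intro a b
    constructor
    · intro hadj
      obtain ⟨⟨e, he⟩, hmap⟩ := hesurj ⟨s(f a, f b), hadj⟩
      induction e with
      | _ x y =>
        have hxy : G.Adj x y := he
        have : Sym2.map ⇑f s(x, y) = s(f a, f b) := congrArg Subtype.val hmap
        rw [Sym2.map_pair_eq] at this
        rw [Sym2.eq_iff] at this
        rcases this with ⟨h1, h2⟩ | ⟨h1, h2⟩
        · rw [hf h1, hf h2] at hxy; exact hxy
        · rw [hf h1, hf h2] at hxy; exact hxy.symm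
    · intro hadj
      exact f.map_adj hadj
end

section
/- Define the min kernel k_min(G,G') = Σ_{F : v(F) ≤ min(v(G),v(G'))} hom(F,G)·hom(F,G'), where the sum ranges over isomorphism classes of graphs with at most min(v(G),v(G')) vertices. Then k_min is a complete kernel on the set of all finite graphs: k_min(G,G) − 2k_min(G,G') + k_min(G',G') = 0 if and only if G ≅ G'. -/
open Function

namespace MinKernelAux

variable {α β : Type*}

/-- Homs between graphs on finite types form a finite type. -/
instance finiteHom [Finite α] [Finite β] (F : SimpleGraph α) (G : SimpleGraph β) :
    Finite (F →g G) :=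
  Finite.of_injective (fun f => (f : α → β)) DFunLike.coe_injective

instance finiteSetoid [Finite α] : Finite (Setoid α) :=
  Finite.of_injective (fun s => s.r) fun s t h => by cases s; cases t; cases h; rfl

/-- The quotient graph of `F` by a setoid `s`. -/
def quotGraph (F : SimpleGraph α) (s : Setoid α) : SimpleGraph (Quotient s) where
  Adj x y := x ≠ y ∧ ∃ u v, Quotient.mk s u = x ∧ Quotient.mk s v = y ∧ F.Adj u v
  symm := ⟨by rintro x y ⟨hne, u, v, hu, hv, h⟩; exact ⟨hne.symm, v, u, hv, hu, h.symm⟩⟩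
  loopless := ⟨by rintro x ⟨hne, -⟩; exact hne rfl⟩

/-- A setoid is independent for `F` if no class contains an edge. -/
def Indep (F : SimpleGraph α) (s : Setoid α) : Prop :=
  ∀ u v, F.Adj u v → ¬ s u v

lemma indep_bot (F : SimpleGraph α) : Indep F ⊥ :=
  fun u v h hb => F.ne_of_adj h hb

/-- Number of injective homomorphisms. -/
noncomputable def Ninj (F : SimpleGraph α) (G : SimpleGraph β) : ℕ :=
  Nat.card {f : F →g G // Injective f}

/-- Composing with an iso on the source gives an equivalence of hom types. -/
def homEquivOfIso {α' : Type*} {F : SimpleGraph α} {F' : SimpleGraph α'}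
    (e : F ≃g F') (G : SimpleGraph β) : (F →g G) ≃ (F' →g G) where
  toFun f := f.comp e.symm.toHom
  invFun f := f.comp e.toHom
  left_inv f := by ext x; simp
  right_inv f := by ext x; simp

/-- Composing with an iso on the target. -/
def homEquivRight {γ : Type*} {F : SimpleGraph α} {G : SimpleGraph β} {G₂ : SimpleGraph γ}
    (e : G ≃g G₂) : (F →g G) ≃ (F →g G₂) where
  toFun f := e.toHom.comp f
  invFun f := e.symm.toHom.comp f
  left_inv f := by ext x; simp
  right_inv f := by ext x; simp

/-- Same for injective homs. -/
def injEquivOfIso {α' : Type*} {F : SimpleGraph α} {F' : SimpleGraph α'}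
    (e : F ≃g F') (G : SimpleGraph β) :
    {f : F →g G // Injective f} ≃ {f : F' →g G // Injective f} where
  toFun f := ⟨f.1.comp e.symm.toHom, by
    have : Injective (⇑f.1 ∘ ⇑e.symm.toHom) := f.2.comp (e.symm.toEquiv.injective)
    exact this⟩
  invFun f := ⟨f.1.comp e.toHom, by
    have : Injective (⇑f.1 ∘ ⇑e.toHom) := f.2.comp (e.toEquiv.injective)
    exact this⟩
  left_inv f := by apply Subtype.ext; ext x; simp
  right_inv f := by apply Subtype.ext; ext x; simp

lemma ninj_congr {α' : Type*} {F : SimpleGraph α} {F' : SimpleGraph α'}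
    (e : F ≃g F') (G : SimpleGraph β) : Ninj F G = Ninj F' G :=
  Nat.card_congr (injEquivOfIso e G)

/-- `F` is isomorphic to its quotient by the bottom setoid. -/
def botIso (F : SimpleGraph α) : F ≃g quotGraph F ⊥ where
  toEquiv :=
    { toFun := Quotient.mk ⊥
      invFun := Quotient.lift id (fun _ _ h => h)
      left_inv := fun a => rfl
      right_inv := fun q => by induction q using Quotient.ind; rfl }
  map_rel_iff' := by
    intro u v
    constructor
    · rintro ⟨hne, u', v', hu, hv, h⟩
      have hu' : u' = u := Quotient.exact hu
      have hv' : v' = v := Quotient.exact hv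
      rwa [hu', hv'] at h
    · intro h
      exact ⟨fun he => F.ne_of_adj h (Quotient.exact he), u, v, rfl, rfl, h⟩

/-- For an independent setoid, homs with kernel `s` correspond to injective homs
from the quotient graph. -/
def fiberEquiv (F : SimpleGraph α) (G : SimpleGraph β) (s : Setoid α) (hs : Indep F s) :
    {f : F →g G // Setoid.ker (f : α → β) = s} ≃
      {g : quotGraph F s →g G // Injective g} where
  toFun f :=
    ⟨⟨Quotient.lift (f.1 : α → β) (fun u v h => by
        rw [← f.2] at h
        exact h), by
      rintro x y ⟨hne, u, v, rfl, rfl, h⟩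
      exact f.1.map_rel h⟩, by
      intro x y
      induction x using Quotient.ind
      induction y using Quotient.ind
      intro h
      have hker : Setoid.ker (f.1 : α → β) _ _ := h
      rw [f.2] at hker
      exact Quotient.sound hker⟩
  invFun g :=
    ⟨g.1.comp ⟨Quotient.mk s, by
      intro u v h
      exact ⟨fun he => hs u v h (Quotient.exact he), u, v, rfl, rfl, h⟩⟩, by
      apply Setoid.ext
      intro a b
      constructor
      · intro h
        exact Quotient.exact (g.2 (h : _ = _))
      · intro h
        exact (congrArg g.1 (Quotient.sound h) : _)⟩
  left_inv f := by apply Subtype.ext; ext x; rfl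
  right_inv g := by
    apply Subtype.ext; ext x
    induction x using Quotient.ind
    rfl

lemma fiber_isEmpty (F : SimpleGraph α) (G : SimpleGraph β) (s : Setoid α)
    (hs : ¬ Indep F s) : IsEmpty {f : F →g G // Setoid.ker (f : α → β) = s} := by
  constructor
  rintro ⟨f, hf⟩
  simp only [Indep, not_forall] at hs
  obtain ⟨u, v, hadj, hsuv⟩ := hs
  rw [not_not] at hsuv
  have : Setoid.ker (f : α → β) u v := hf ▸ hsuv
  have hfe : f u = f v := this
  have := f.map_rel hadj
  rw [hfe] at this
  exact G.loopless.irrefl _ this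

lemma quotient_card_lt [Fintype α] (s : Setoid α) (hs : s ≠ ⊥)
    [Fintype (Quotient s)] : Fintype.card (Quotient s) < Fintype.card α := by
  have : ∃ u v, u ≠ v ∧ s u v := by
    by_contra h
    push_neg at h
    apply hs
    apply Setoid.ext
    intro a b
    constructor
    · intro hab
      by_contra hne
      exact h a b hne hab
    · intro hab
      exact hab ▸ s.refl a
  obtain ⟨u, v, hne, hsuv⟩ := this
  apply Fintype.card_lt_of_surjective_not_injective (Quotient.mk s)
  · intro q; induction q using Quotient.ind; exact ⟨_, rfl⟩
  · intro hinj
    exact hne (hinj (Quotient.sound hsuv))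

/-- Decomposition of hom counts over kernels. -/
lemma card_hom_decomp [Fintype α] [Finite β] (F : SimpleGraph α) (G : SimpleGraph β)
    [Fintype (Setoid α)] [DecidableEq (Setoid α)] :
    Nat.card (F →g G) =
      Nat.card {f : F →g G // Setoid.ker (f : α → β) = ⊥} +
      ∑ s ∈ Finset.univ.erase (⊥ : Setoid α),
        Nat.card {f : F →g G // Setoid.ker (f : α → β) = s} := by
  letI : Fintype (F →g G) := Fintype.ofFinite _
  letI : ∀ s : Setoid α, Fintype {f : F →g G // Setoid.ker (f : α → β) = s} :=
    fun s => Fintype.ofFinite _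
  have h1 : Nat.card (F →g G) =
      ∑ s : Setoid α, Nat.card {f : F →g G // Setoid.ker (f : α → β) = s} := by
    rw [Nat.card_congr (Equiv.sigmaFiberEquiv (fun f : F →g G =>
      Setoid.ker (f : α → β))).symm]
    rw [Nat.card_eq_fintype_card, Fintype.card_sigma]
    exact Finset.sum_congr rfl fun s _ => (Nat.card_eq_fintype_card).symm
  rw [h1, ← Finset.add_sum_erase _ _ (Finset.mem_univ (⊥ : Setoid α))]

/-- Key induction: if hom counts from all small graphs agree, injective hom counts agree. -/
lemma ninj_eq {m : ℕ} (G G' : SimpleGraph (Fin m))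
    (h : ∀ k, k ≤ m → ∀ F : SimpleGraph (Fin k),
      Nat.card (F →g G) = Nat.card (F →g G')) :
    ∀ n, n ≤ m → ∀ (α : Type) [Fintype α], Fintype.card α = n →
      ∀ F : SimpleGraph α, Ninj F G = Ninj F G' := by
  intro n
  induction n using Nat.strong_induction_on with
  | _ n IH =>
    intro hnm α _ hcard F
    classical
    subst hcard
    -- transfer hom counts
    have homeq : Nat.card (F →g G) = Nat.card (F →g G') := by
      set e := (Fintype.equivFin α).symm with he
      set F₀ := F.comap e.toEmbedding with hF0
      have iso : F₀ ≃g F := SimpleGraph.Iso.comap e F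
      rw [Nat.card_congr (homEquivOfIso iso.symm G),
          Nat.card_congr (homEquivOfIso iso.symm G')]
      exact h _ hnm F₀
    letI : Fintype (Setoid α) := Fintype.ofFinite _
    have key : ∀ s ∈ Finset.univ.erase (⊥ : Setoid α),
        Nat.card {f : F →g G // Setoid.ker (f : α → Fin m) = s} =
        Nat.card {f : F →g G' // Setoid.ker (f : α → Fin m) = s} := by
      intro s hsmem
      have hs : s ≠ ⊥ := (Finset.mem_erase.mp hsmem).1
      by_cases hind : Indep F s
      · rw [Nat.card_congr (fiberEquiv F G s hind),
            Nat.card_congr (fiberEquiv F G' s hind)]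
        letI : Fintype (Quotient s) := Fintype.ofFinite _
        have hlt : Fintype.card (Quotient s) < Fintype.card α := quotient_card_lt s hs
        exact IH _ hlt (le_of_lt (lt_of_lt_of_le hlt hnm)) (Quotient s) rfl (quotGraph F s)
      · haveI := fiber_isEmpty F G s hind
        haveI := fiber_isEmpty F G' s hind
        rw [Nat.card_of_isEmpty, Nat.card_of_isEmpty]
    have d1 := card_hom_decomp F G
    have d2 := card_hom_decomp F G'
    have sums_eq : (∑ s ∈ Finset.univ.erase (⊥ : Setoid α),
        Nat.card {f : F →g G // Setoid.ker (f : α → Fin m) = s}) =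
        ∑ s ∈ Finset.univ.erase (⊥ : Setoid α),
        Nat.card {f : F →g G' // Setoid.ker (f : α → Fin m) = s} :=
      Finset.sum_congr rfl key
    have bot_eq : Nat.card {f : F →g G // Setoid.ker (f : α → Fin m) = ⊥} =
        Nat.card {f : F →g G' // Setoid.ker (f : α → Fin m) = ⊥} := by
      omega
    calc Ninj F G = Nat.card {g : quotGraph F ⊥ →g G // Injective g} :=
          ninj_congr (botIso F) G
      _ = Nat.card {f : F →g G // Setoid.ker (f : α → Fin m) = ⊥} :=
          (Nat.card_congr (fiberEquiv F G ⊥ (indep_bot F))).symm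
      _ = Nat.card {f : F →g G' // Setoid.ker (f : α → Fin m) = ⊥} := bot_eq
      _ = Nat.card {g : quotGraph F ⊥ →g G' // Injective g} :=
          Nat.card_congr (fiberEquiv F G' ⊥ (indep_bot F))
      _ = Ninj F G' := (ninj_congr (botIso F) G').symm

/-- A bijective endo-hom of a finite graph reflects adjacency. -/
lemma adj_of_adj_endo {m : ℕ} {G : SimpleGraph (Fin m)} (k : G →g G)
    (hk : Injective ⇑k) {u v : Fin m} (h : G.Adj (k u) (k v)) : G.Adj u v := by
  set Φ : {p : Fin m × Fin m // G.Adj p.1 p.2} → {p : Fin m × Fin m // G.Adj p.1 p.2} :=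
    fun p => ⟨(k p.1.1, k p.1.2), k.map_rel p.2⟩ with hΦ
  have hinj : Injective Φ := by
    rintro ⟨⟨a, b⟩, hab⟩ ⟨⟨c, d⟩, hcd⟩ heq
    simp only [hΦ, Subtype.mk.injEq, Prod.mk.injEq] at heq
    exact Subtype.ext (Prod.ext (hk heq.1) (hk heq.2))
  have hsurj : Surjective Φ := Finite.surjective_of_injective hinj
  obtain ⟨⟨⟨a, b⟩, hab⟩, heq⟩ := hsurj ⟨(k u, k v), h⟩
  simp only [hΦ, Subtype.mk.injEq, Prod.mk.injEq] at heq
  rwa [← hk heq.1, ← hk heq.2]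

lemma iso_of_inj {m : ℕ} {G G' : SimpleGraph (Fin m)}
    (f : G →g G') (hf : Injective ⇑f) (g : G' →g G) (hg : Injective ⇑g) :
    Nonempty (G ≃g G') := by
  have hbij : Bijective ⇑f := Finite.injective_iff_bijective.mp hf
  refine ⟨⟨Equiv.ofBijective ⇑f hbij, ?_⟩⟩
  intro u v
  constructor
  · intro h
    have h2 : G.Adj (g (f u)) (g (f v)) := g.map_rel h
    exact adj_of_adj_endo (g.comp f) (hg.comp hf) h2
  · exact f.map_rel

/-- Lovász: graphs on the same vertex count with equal hom counts from all
small graphs are isomorphic. -/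
lemma lovasz {m : ℕ} (G G' : SimpleGraph (Fin m))
    (h : ∀ k, k ≤ m → ∀ F : SimpleGraph (Fin k),
      Nat.card (F →g G) = Nat.card (F →g G')) :
    Nonempty (G ≃g G') := by
  have h' : ∀ k, k ≤ m → ∀ F : SimpleGraph (Fin k),
      Nat.card (F →g G') = Nat.card (F →g G) := fun k hk F => (h k hk F).symm
  have e1 : Ninj G G = Ninj G G' :=
    ninj_eq G G' h m le_rfl (Fin m) (Fintype.card_fin m) G
  have e2 : Ninj G' G' = Ninj G' G :=
    ninj_eq G' G h' m le_rfl (Fin m) (Fintype.card_fin m) G'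
  haveI : Nonempty {f : G →g G // Injective ⇑f} := ⟨⟨SimpleGraph.Hom.id, injective_id⟩⟩
  haveI : Nonempty {f : G' →g G' // Injective ⇑f} := ⟨⟨SimpleGraph.Hom.id, injective_id⟩⟩
  have p1 : 0 < Ninj G G := Nat.card_pos
  have p2 : 0 < Ninj G' G' := Nat.card_pos
  rw [e1] at p1
  rw [e2] at p2
  obtain ⟨⟨f, hf⟩, -⟩ := (Nat.card_pos_iff.mp p1)
  obtain ⟨⟨g, hg⟩, -⟩ := (Nat.card_pos_iff.mp p2)
  exact iso_of_inj f hf g hg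

end MinKernelAux

/-- The min kernel: `k_min(G,G') = ∑_{F : v(F) ≤ min(v(G), v(G'))} hom(F,G)·hom(F,G')`,
summing over (representatives of) all graphs with at most `min(v(G), v(G'))` vertices. -/
noncomputable def minKernel {m m' : ℕ} (G : SimpleGraph (Fin m)) (G' : SimpleGraph (Fin m')) : ℝ :=
  ∑ F : Σ k : Fin (min m m' + 1), SimpleGraph (Fin k.val),
    (Nat.card (F.2 →g G) : ℝ) * (Nat.card (F.2 →g G') : ℝ)

namespace MinKernelAux

/-- Generalized sum with an arbitrary vertex bound. -/
noncomputable def S (n : ℕ) {p q : ℕ} (G : SimpleGraph (Fin p)) (G' : SimpleGraph (Fin q)) : ℝ :=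
  ∑ F : Σ k : Fin (n + 1), SimpleGraph (Fin k.val),
    (Nat.card (F.2 →g G) : ℝ) * (Nat.card (F.2 →g G') : ℝ)

lemma minKernel_eq_S {m m' : ℕ} (G : SimpleGraph (Fin m)) (G' : SimpleGraph (Fin m')) :
    minKernel G G' = S (min m m') G G' := rfl

lemma S_comm (n : ℕ) {p q : ℕ} (G : SimpleGraph (Fin p)) (G' : SimpleGraph (Fin q)) :
    S n G G' = S n G' G :=
  Finset.sum_congr rfl fun F _ => mul_comm _ _

lemma S_quad (n : ℕ) {p q : ℕ} (G : SimpleGraph (Fin p)) (G' : SimpleGraph (Fin q)) :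
    S n G G - 2 * S n G G' + S n G' G' =
      ∑ F : Σ k : Fin (n + 1), SimpleGraph (Fin k.val),
        ((Nat.card (F.2 →g G) : ℝ) - (Nat.card (F.2 →g G') : ℝ))^2 := by
  simp only [S, Finset.mul_sum, ← Finset.sum_sub_distrib, ← Finset.sum_add_distrib]
  exact Finset.sum_congr rfl fun F _ => by ring

lemma S_range (n : ℕ) {p q : ℕ} (G : SimpleGraph (Fin p)) (G' : SimpleGraph (Fin q)) :
    S n G G' = ∑ k ∈ Finset.range (n + 1),
      ∑ F : SimpleGraph (Fin k), (Nat.card (F →g G) : ℝ) * (Nat.card (F →g G') : ℝ) := by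
  rw [S, ← Fin.sum_univ_eq_sum_range (fun k => ∑ F : SimpleGraph (Fin k),
    (Nat.card (F →g G) : ℝ) * (Nat.card (F →g G') : ℝ)) (n+1)]
  rw [← Finset.univ_sigma_univ, Finset.sum_sigma]

lemma S_nonneg_term {p q : ℕ} (G : SimpleGraph (Fin p)) (G' : SimpleGraph (Fin q)) (k : ℕ) :
    0 ≤ ∑ F : SimpleGraph (Fin k), (Nat.card (F →g G') : ℝ) * (Nat.card (F →g G') : ℝ) :=
  Finset.sum_nonneg fun F _ => mul_nonneg (Nat.cast_nonneg _) (Nat.cast_nonneg _)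

/-- Positivity of the kernel expression when the vertex counts differ, `p < q` version. -/
lemma expr_pos {p q : ℕ} (hpq : p < q) (G : SimpleGraph (Fin p)) (G' : SimpleGraph (Fin q)) :
    0 < S p G G - 2 * S p G G' + S q G' G' := by
  have split : S p G G - 2 * S p G G' + S q G' G' =
      (S p G G - 2 * S p G G' + S p G' G') + (S q G' G' - S p G' G') := by ring
  rw [split]
  have h1 : 0 ≤ S p G G - 2 * S p G G' + S p G' G' := by
    rw [S_quad]
    exact Finset.sum_nonneg fun F _ => sq_nonneg _
  have h2 : 0 < S q G' G' - S p G' G' := by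
    rw [S_range, S_range]
    set c : ℕ → ℝ := fun k => ∑ F : SimpleGraph (Fin k),
      (Nat.card (F →g G') : ℝ) * (Nat.card (F →g G') : ℝ) with hc
    have hcnonneg : ∀ k, 0 ≤ c k := fun k => S_nonneg_term G G' k
    have hcons : (∑ k ∈ Finset.Ico 0 (p+1), c k) + ∑ k ∈ Finset.Ico (p+1) (q+1), c k
        = ∑ k ∈ Finset.Ico 0 (q+1), c k :=
      Finset.sum_Ico_consecutive c (by omega) (by omega)
    have hhom : Nonempty ((⊥ : SimpleGraph (Fin (p+1))) →g G') :=
      ⟨⟨fun _ => ⟨0, by omega⟩, fun {a b} h => False.elim h⟩⟩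
    have hb : (1 : ℝ) ≤ (Nat.card ((⊥ : SimpleGraph (Fin (p+1))) →g G') : ℝ) := by
      have : 0 < Nat.card ((⊥ : SimpleGraph (Fin (p+1))) →g G') := Nat.card_pos
      exact_mod_cast this
    have hpos : 0 < c (p+1) := by
      apply Finset.sum_pos'
      · intro F _
        exact mul_nonneg (Nat.cast_nonneg _) (Nat.cast_nonneg _)
      · exact ⟨⊥, Finset.mem_univ _, by nlinarith⟩
    have hle : c (p+1) ≤ ∑ k ∈ Finset.Ico (p+1) (q+1), c k :=
      Finset.single_le_sum (fun k _ => hcnonneg k)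
        (by simp only [Finset.mem_Ico]; omega)
    rw [Finset.range_eq_Ico, Finset.range_eq_Ico]
    linarith
  linarith

end MinKernelAux

/-- The min kernel is a complete kernel on the set of all finite graphs:
`k_min(G,G) - 2k_min(G,G') + k_min(G',G') = 0` if and only if `G ≅ G'`. -/
theorem minKernel_complete (m m' : ℕ) (G : SimpleGraph (Fin m)) (G' : SimpleGraph (Fin m')) :
    minKernel G G - 2 * minKernel G G' + minKernel G' G' = 0 ↔ Nonempty (G ≃g G') := by
  open MinKernelAux in
  by_cases hm : m = m'
  · subst hm
    rw [minKernel_eq_S, minKernel_eq_S, minKernel_eq_S, Nat.min_self]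
    constructor
    · intro h0
      rw [S_quad] at h0
      have hall := (Finset.sum_eq_zero_iff_of_nonneg (fun F _ => sq_nonneg _)).mp h0
      apply lovasz
      intro k hk F
      have hF := hall ⟨⟨k, by omega⟩, F⟩ (Finset.mem_univ _)
      have := sub_eq_zero.mp ((pow_eq_zero_iff (two_ne_zero)).mp hF)
      exact_mod_cast this
    · rintro ⟨e⟩
      rw [S_quad]
      apply Finset.sum_eq_zero
      intro F _
      have : Nat.card (F.2 →g G) = Nat.card (F.2 →g G') :=
        Nat.card_congr (homEquivRight e)
      rw [this, sub_self]
      ring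
  · have hne : ¬ Nonempty (G ≃g G') := by
      rintro ⟨e⟩
      apply hm
      simpa using Fintype.card_congr e.toEquiv
    apply iff_of_false _ hne
    rcases lt_or_gt_of_ne hm with hlt | hlt
    · have h1 : minKernel G G = S m G G := by
        rw [minKernel_eq_S, Nat.min_self]
      have h2 : minKernel G G' = S m G G' := by
        rw [minKernel_eq_S, Nat.min_eq_left (le_of_lt hlt)]
      have h3 : minKernel G' G' = S m' G' G' := by
        rw [minKernel_eq_S, Nat.min_self]
      rw [h1, h2, h3]
      exact ne_of_gt (expr_pos hlt G G')
    · have h1 : minKernel G G = S m G G := by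
        rw [minKernel_eq_S, Nat.min_self]
      have h2 : minKernel G G' = S m' G G' := by
        rw [minKernel_eq_S, Nat.min_eq_right (le_of_lt hlt)]
      have h3 : minKernel G' G' = S m' G' G' := by
        rw [minKernel_eq_S, Nat.min_self]
      rw [h1, h2, h3]
      have hpos := expr_pos hlt G' G
      have hcomm := S_comm m' G G'
      intro habs
      linarith
end
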